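/- For every v = (v_j)_{j∈𝑁} with each v_j ∈ [0,1], the set {u ∈ [0,1] : B̄_𝑁(u) + B_𝑁(u,v) = 0} is nonempty and has a least element ρ(v); moreover ρ(v) ≤ ρ, where ρ is the least element of the (nonempty) set {u ∈ [0,1] : B(u) = 0}. -/

import Mathlib

/-- For every `v` with each `v_j ∈ [0,1]`, the set
`{u ∈ [0,1] : B̄_N(u) + B_N(u,v) = 0}` is nonempty and has a least element `ρ(v)`;
moreover `ρ(v) ≤ ρ`, where `ρ` is the least element of `{u ∈ [0,1] : B(u) = 0}`. -/
theorem stmt_1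
    (b : ℕ → ℝ)
    (hb_nonneg : ∀ j : ℕ, j ≠ 1 → 0 ≤ b j)
    (hb1 : b 1 < 0)
    (hb_sum : HasSum (fun j : ℕ => if j = 1 then 0 else b j) (-(b 1)))
    (N : Finset ℕ) (hN : N.Nonempty) (h1N : (1 : ℕ) ∉ N)
    (hbN : ∀ k ∈ N, 0 < b k)
    (v : ℕ → ℝ) (hv : ∀ j ∈ N, v j ∈ Set.Icc (0 : ℝ) 1) :
    ∃ ρv ρ : ℝ,
      IsLeast {u : ℝ | u ∈ Set.Icc (0 : ℝ) 1 ∧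
          (∑' j : ℕ, if j ∈ N then 0 else b j * u ^ j)
            + (∑ j ∈ N, b j * v j * u ^ j) = 0} ρv ∧
      IsLeast {u : ℝ | u ∈ Set.Icc (0 : ℝ) 1 ∧ (∑' j : ℕ, b j * u ^ j) = 0} ρ ∧
      ρv ≤ ρ := by
  -- absolute summability of b
  have hS : Summable (fun j : ℕ => if j = 1 then 0 else b j) := hb_sum.summable
  have habs : Summable (fun j => |b j|) := by
    have heq : (fun j => |b j|)
        = fun j => (if j = 1 then 0 else b j) + (if j = 1 then -b 1 else 0) := by
      funext j
      by_cases h : j = 1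
      · subst h; simp [abs_of_neg hb1]
      · simp [h, abs_of_nonneg (hb_nonneg j h)]
    rw [heq]
    refine hS.add (summable_of_ne_finset_zero (s := {1}) ?_)
    intro j hj
    simp only [Finset.mem_singleton] at hj
    simp [hj]
  -- summability of coefficient sequences dominated by |b|
  have key_summable : ∀ (c : ℕ → ℝ), (∀ j, |c j| ≤ |b j|) → ∀ u : ℝ,
      u ∈ Set.Icc (0:ℝ) 1 → Summable (fun j => c j * u ^ j) := by
    intro c hc u hu
    apply Summable.of_abs
    refine habs.of_nonneg_of_le (fun j => abs_nonneg _) ?_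
    intro j
    rw [abs_mul, abs_pow]
    calc |c j| * |u| ^ j ≤ |b j| * 1 := by
          apply mul_le_mul (hc j) ?_ (pow_nonneg (abs_nonneg u) j) (abs_nonneg _)
          exact pow_le_one₀ (abs_nonneg u) (by rw [abs_of_nonneg hu.1]; exact hu.2)
      _ = |b j| := mul_one _
  -- continuity of power series with dominated coefficients
  have key_cont : ∀ (c : ℕ → ℝ), (∀ j, |c j| ≤ |b j|) →
      ContinuousOn (fun u : ℝ => ∑' j, c j * u ^ j) (Set.Icc 0 1) := by
    intro c hc
    rw [continuousOn_iff_continuous_restrict]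
    have h := continuous_tsum (f := fun (j : ℕ) (x : Set.Icc (0:ℝ) 1) => c j * (x:ℝ) ^ j)
      (u := fun j => |b j|)
      (fun j => Continuous.mul continuous_const (continuous_subtype_val.pow j)) habs ?_
    · exact h
    · intro j x
      rw [Real.norm_eq_abs, abs_mul, abs_pow]
      calc |c j| * |(x:ℝ)| ^ j ≤ |b j| * 1 := by
            apply mul_le_mul (hc j) ?_ (pow_nonneg (abs_nonneg _) j) (abs_nonneg _)
            exact pow_le_one₀ (abs_nonneg _) (by rw [abs_of_nonneg x.2.1]; exact x.2.2)
        _ = |b j| := mul_one _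
  have hc_dom : ∀ j, |(if j ∈ N then 0 else b j)| ≤ |b j| := by
    intro j; split <;> simp [abs_nonneg]
  have hb_dom : ∀ j, |b j| ≤ |b j| := fun j => le_rfl
  -- define the two functions
  set f : ℝ → ℝ := fun u => ∑' j, b j * u ^ j with hf
  set g : ℝ → ℝ := fun u => (∑' j, (if j ∈ N then 0 else b j) * u ^ j)
      + ∑ j ∈ N, b j * v j * u ^ j with hg
  -- rewrite the goal's tsum into coefficient form
  have hrw : ∀ u : ℝ, (∑' j : ℕ, if j ∈ N then 0 else b j * u ^ j)
      = ∑' j, (if j ∈ N then 0 else b j) * u ^ j := by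
    intro u
    refine tsum_congr fun j => ?_
    split <;> simp
  have hfcont : ContinuousOn f (Set.Icc 0 1) := key_cont b hb_dom
  have hgcont : ContinuousOn g (Set.Icc 0 1) := by
    apply ContinuousOn.add (key_cont _ hc_dom)
    exact (continuous_finset_sum N fun j _ =>
      Continuous.mul continuous_const (continuous_pow j)).continuousOn
  -- total sum of b is 0
  have hb_total : HasSum b 0 := by
    have h2 : HasSum (fun j : ℕ => if j = 1 then b 1 else 0) (b 1) := hasSum_ite_eq 1 (b 1)
    have h3 := hb_sum.add h2
    simp only [neg_add_cancel] at h3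
    convert h3 using 1
    funext j
    by_cases h : j = 1 <;> simp [h]
  -- f 1 = 0
  have hf1 : f 1 = 0 := by
    have : f 1 = ∑' j, b j := by simp [hf]
    rw [this, hb_total.tsum_eq]
  -- f nonneg at 0; membership set for f
  have SfrhoNe : (1:ℝ) ∈ {u : ℝ | u ∈ Set.Icc (0 : ℝ) 1 ∧ f u = 0} := by
    exact ⟨⟨zero_le_one, le_rfl⟩, hf1⟩
  -- the f-set is closed
  have hSfclosed : IsClosed {u : ℝ | u ∈ Set.Icc (0 : ℝ) 1 ∧ f u = 0} := by
    have : {u : ℝ | u ∈ Set.Icc (0 : ℝ) 1 ∧ f u = 0}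
        = Set.Icc (0:ℝ) 1 ∩ f ⁻¹' {0} := by
      ext u; simp [Set.mem_inter_iff]
    rw [this]
    exact hfcont.preimage_isClosed_of_isClosed isClosed_Icc isClosed_singleton
  have hSfbdd : BddBelow {u : ℝ | u ∈ Set.Icc (0 : ℝ) 1 ∧ f u = 0} :=
    ⟨0, fun x hx => hx.1.1⟩
  set ρ := sInf {u : ℝ | u ∈ Set.Icc (0 : ℝ) 1 ∧ f u = 0} with hρ
  have hρmem : ρ ∈ {u : ℝ | u ∈ Set.Icc (0 : ℝ) 1 ∧ f u = 0} :=
    hSfclosed.csInf_mem ⟨1, SfrhoNe⟩ hSfbdd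
  have hρleast : IsLeast {u : ℝ | u ∈ Set.Icc (0 : ℝ) 1 ∧ f u = 0} ρ :=
    ⟨hρmem, fun x hx => csInf_le hSfbdd hx⟩
  -- splitting f into the tail and the N-part
  have hsplit : ∀ u : ℝ, u ∈ Set.Icc (0:ℝ) 1 →
      f u = (∑' j, (if j ∈ N then 0 else b j) * u ^ j) + ∑ j ∈ N, b j * u ^ j := by
    intro u hu
    have h1 : Summable (fun j => (if j ∈ N then 0 else b j) * u ^ j) :=
      key_summable _ hc_dom u hu
    have h2 : Summable (fun j => (if j ∈ N then b j else 0) * u ^ j) := by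
      apply summable_of_ne_finset_zero (s := N)
      intro j hj
      simp [hj]
    have heq : (fun j => b j * u ^ j)
        = fun j => (if j ∈ N then 0 else b j) * u ^ j + (if j ∈ N then b j else 0) * u ^ j := by
      funext j
      by_cases h : j ∈ N <;> simp [h]
    have hsum2 : ∑' j, (if j ∈ N then b j else 0) * u ^ j = ∑ j ∈ N, b j * u ^ j := by
      rw [tsum_eq_sum (s := N) (f := fun j => (if j ∈ N then b j else 0) * u ^ j)
        (by intro j hj; simp [hj])]
      exact Finset.sum_congr rfl fun j hj => by simp [hj]
    calc f u = ∑' j, ((if j ∈ N then 0 else b j) * u ^ j + (if j ∈ N then b j else 0) * u ^ j) := by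
          rw [hf]; exact tsum_congr fun j => congrFun heq j
      _ = _ := by rw [Summable.tsum_add h1 h2, hsum2]
  -- g ≤ f on [0,1]
  have hgle : ∀ u : ℝ, u ∈ Set.Icc (0:ℝ) 1 → g u ≤ f u := by
    intro u hu
    rw [hsplit u hu, hg]
    apply add_le_add le_rfl
    apply Finset.sum_le_sum
    intro j hj
    have hb := (hbN j hj).le
    have hvj := hv j hj
    have hup : (0:ℝ) ≤ u ^ j := pow_nonneg hu.1 j
    calc b j * v j * u ^ j ≤ b j * 1 * u ^ j := by
          apply mul_le_mul_of_nonneg_right _ hup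
          exact mul_le_mul_of_nonneg_left hvj.2 hb
      _ = b j * u ^ j := by ring
  -- g 0 ≥ 0
  have hg0 : 0 ≤ g 0 := by
    rw [hg]
    apply add_nonneg
    · apply tsum_nonneg
      intro j
      rcases Nat.eq_zero_or_pos j with h | h
      · subst h
        split <;> simp [hb_nonneg 0 (by norm_num)]
      · simp [zero_pow h.ne']
    · apply Finset.sum_nonneg
      intro j hj
      exact mul_nonneg (mul_nonneg (hbN j hj).le (hv j hj).1) (pow_nonneg le_rfl j)
  -- g ρ ≤ 0
  have hgρ : g ρ ≤ 0 := by
    have := hgle ρ hρmem.1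
    rw [hρmem.2] at this
    exact this
  -- IVT on [0, ρ] for g
  have hρ01 : ρ ∈ Set.Icc (0:ℝ) 1 := hρmem.1
  have hsub : Set.Icc (0:ℝ) ρ ⊆ Set.Icc 0 1 :=
    Set.Icc_subset_Icc le_rfl hρ01.2
  have hIVT := intermediate_value_Icc' (a := (0:ℝ)) (b := ρ) hρ01.1
    (hgcont.mono hsub)
  have h0mem : (0:ℝ) ∈ Set.Icc (g ρ) (g 0) := ⟨hgρ, hg0⟩
  obtain ⟨u₀, hu₀mem, hu₀⟩ := hIVT h0mem
  -- the g-set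
  set Sg := {u : ℝ | u ∈ Set.Icc (0 : ℝ) 1 ∧ g u = 0} with hSg
  have hu₀Sg : u₀ ∈ Sg := ⟨hsub hu₀mem, hu₀⟩
  have hSgclosed : IsClosed Sg := by
    have : Sg = Set.Icc (0:ℝ) 1 ∩ g ⁻¹' {0} := by
      ext u; simp [hSg, Set.mem_inter_iff]
    rw [this]
    exact hgcont.preimage_isClosed_of_isClosed isClosed_Icc isClosed_singleton
  have hSgbdd : BddBelow Sg := ⟨0, fun x hx => hx.1.1⟩
  set ρv := sInf Sg with hρv
  have hρvmem : ρv ∈ Sg := hSgclosed.csInf_mem ⟨u₀, hu₀Sg⟩ hSgbdd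
  have hρvleast : IsLeast Sg ρv := ⟨hρvmem, fun x hx => csInf_le hSgbdd hx⟩
  refine ⟨ρv, ρ, ?_, ?_, ?_⟩
  · convert hρvleast using 2
    ext u
    simp only [Set.mem_setOf_eq, hSg, hg, hrw u]
  · exact hρleast
  · calc ρv ≤ u₀ := csInf_le hSgbdd hu₀Sg
      _ ≤ ρ := hu₀mem.2
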